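/- Let V, Z_1, …, Z_l : ℝ^n → ℝ^n be smooth vector fields and suppose there exist smooth functions U^γ_{αβ}, V^β_α : ℝ^n → ℝ (α, β, γ ∈ {1,…,l}) such that pointwise [Z_α, Z_β](x) = Σ_γ U^γ_{αβ}(x) Z_γ(x) and [Z_α, V](x) = Σ_β V^β_α(x) Z_β(x). Let x : ℝ → ℝ^n and λ : ℝ → ℝ^l be smooth curves satisfying ẋ(t) = V(x(t)) + Σ_α λ^α(t) Z_α(x(t)) for all t, and let ε : ℝ → ℝ^l be smooth. Define δx(t) = Σ_α ε^α(t) Z_α(x(t)) and δλ^α(t) = ε̇^α(t) − Σ_β (V^α_β(x(t)) + Σ_γ U^α_{βγ}(x(t)) λ^γ(t)) ε^β(t). Then the linearized equation of motion holds: d/dt δx(t) = DV(x(t))·δx(t) + Σ_α λ^α(t) DZ_α(x(t))·δx(t) + Σ_α δλ^α(t) Z_α(x(t)) for all t. (This expresses that the transformation δ_ε x = Z_α ε^α, δ_ε λ^α = ε̇^α − (V^α_β + U^α_{βγ} λ^γ) ε^β is a gauge symmetry of the system ẋ = V(x) + λ^α Z_α(x).) -/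

import Mathlib

private lemma gauge_alg (n l : ℕ) (V : (Fin n → ℝ) → (Fin n → ℝ)) (Z : Fin l → (Fin n → ℝ) → (Fin n → ℝ))
    (U : Fin l → Fin l → Fin l → (Fin n → ℝ) → ℝ)
    (Vc : Fin l → Fin l → (Fin n → ℝ) → ℝ)
    (y : Fin n → ℝ) (a b e : Fin l → ℝ)
    (hU' : ∀ α β : Fin l, (fderiv ℝ (Z α) y) (Z β y)
      = (fderiv ℝ (Z β) y) (Z α y) + ∑ γ, U γ β α y • Z γ y)
    (hVc' : ∀ β : Fin l, (fderiv ℝ V y) (Z β y)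
      = (fderiv ℝ (Z β) y) (V y) + ∑ α, Vc α β y • Z α y) :
    ∑ α, (a α • (fderiv ℝ (Z α) y) (V y + ∑ γ, b γ • Z γ y) + e α • Z α y)
      = (fderiv ℝ V y) (∑ α, a α • Z α y)
        + ∑ α, b α • (fderiv ℝ (Z α) y) (∑ β, a β • Z β y)
        + ∑ α, (e α - ∑ β, (Vc α β y + ∑ γ, U α β γ y * b γ) * a β) • Z α y := by
  have lhs_eq : ∑ α, (a α • (fderiv ℝ (Z α) y) (V y + ∑ γ, b γ • Z γ y) + e α • Z α y)
      = ((∑ α, a α • (fderiv ℝ (Z α) y) (V y))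
          + ∑ α, ∑ γ, (a α * b γ) • (fderiv ℝ (Z α) y) (Z γ y))
        + ∑ α, e α • Z α y := by
    rw [← Finset.sum_add_distrib, ← Finset.sum_add_distrib]
    refine Finset.sum_congr rfl fun α _ => ?_
    rw [map_add, map_sum, smul_add, Finset.smul_sum]
    congr 1
    refine congrArg _ (Finset.sum_congr rfl fun γ _ => ?_)
    rw [map_smul, smul_smul]
  have term1 : (fderiv ℝ V y) (∑ α, a α • Z α y)
      = (∑ β, a β • (fderiv ℝ (Z β) y) (V y))
        + ∑ β, ∑ α, (a β * Vc α β y) • Z α y := by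
    rw [map_sum, ← Finset.sum_add_distrib]
    refine Finset.sum_congr rfl fun β _ => ?_
    rw [map_smul, hVc' β, smul_add, Finset.smul_sum]
    congr 1
    exact Finset.sum_congr rfl fun α _ => (smul_smul _ _ _)
  have term2 : ∑ α, b α • (fderiv ℝ (Z α) y) (∑ β, a β • Z β y)
      = (∑ α, ∑ β, (b α * a β) • (fderiv ℝ (Z β) y) (Z α y))
        + ∑ α, ∑ β, ∑ γ, (b α * a β * U γ β α y) • Z γ y := by
    rw [← Finset.sum_add_distrib]
    refine Finset.sum_congr rfl fun α _ => ?_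
    rw [map_sum, Finset.smul_sum, ← Finset.sum_add_distrib]
    refine Finset.sum_congr rfl fun β _ => ?_
    rw [map_smul, hU' α β, smul_add, smul_add, smul_smul, smul_smul, Finset.smul_sum]
    congr 1
    refine Finset.sum_congr rfl fun γ _ => ?_
    rw [smul_smul]
  have term3 : ∑ α, (e α - ∑ β, (Vc α β y + ∑ γ, U α β γ y * b γ) * a β) • Z α y
      = ((∑ α, e α • Z α y)
          - ∑ α, ∑ β, (Vc α β y * a β) • Z α y)
        - ∑ α, ∑ β, ∑ γ, (U α β γ y * b γ * a β) • Z α y := by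
    rw [sub_sub, ← Finset.sum_add_distrib, ← Finset.sum_sub_distrib]
    refine Finset.sum_congr rfl fun α _ => ?_
    rw [sub_smul]
    congr 1
    rw [← Finset.sum_add_distrib, Finset.sum_smul]
    refine Finset.sum_congr rfl fun β _ => ?_
    rw [add_mul, add_smul, Finset.sum_mul, Finset.sum_smul]
  have hB : ∑ α, ∑ β, (b α * a β) • (fderiv ℝ (Z β) y) (Z α y)
      = ∑ α, ∑ γ, (a α * b γ) • (fderiv ℝ (Z α) y) (Z γ y) := by
    rw [Finset.sum_comm]
    exact Finset.sum_congr rfl fun α _ => Finset.sum_congr rfl fun γ _ => by rw [mul_comm]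
  have hVcB : ∑ β, ∑ α, (a β * Vc α β y) • Z α y = ∑ α, ∑ β, (Vc α β y * a β) • Z α y := by
    rw [Finset.sum_comm]
    exact Finset.sum_congr rfl fun α _ => Finset.sum_congr rfl fun β _ => by rw [mul_comm]
  have hUB : ∑ α, ∑ β, ∑ γ, (b α * a β * U γ β α y) • Z γ y
      = ∑ α, ∑ β, ∑ γ, (U α β γ y * b γ * a β) • Z α y := by
    calc ∑ α, ∑ β, ∑ γ, (b α * a β * U γ β α y) • Z γ y
        = ∑ β, ∑ α, ∑ γ, (b α * a β * U γ β α y) • Z γ y := Finset.sum_comm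
      _ = ∑ β, ∑ γ, ∑ α, (b α * a β * U γ β α y) • Z γ y :=
          Finset.sum_congr rfl fun _ _ => Finset.sum_comm
      _ = ∑ γ, ∑ β, ∑ α, (b α * a β * U γ β α y) • Z γ y := Finset.sum_comm
      _ = ∑ α, ∑ β, ∑ γ, (U α β γ y * b γ * a β) • Z α y := by
          refine Finset.sum_congr rfl fun α _ => Finset.sum_congr rfl fun β _ =>
            Finset.sum_congr rfl fun γ _ => ?_
          congr 1
          ring
  rw [lhs_eq, term1, term2, term3, hB, hVcB, hUB]
  abel



/-- If the characteristic distribution `span{Z_α}` is involutive,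
`[Z_α, Z_β] = U^γ_{αβ} Z_γ`, and preserved by the drift `V`,
`[Z_α, V] = V^β_α Z_β`, then the transformation
`δ_ε x = ε^α Z_α(x)`, `δ_ε λ^α = ε̇^α − (V^α_β + U^α_{βγ} λ^γ) ε^β`
is a gauge symmetry of `ẋ = V(x) + λ^α Z_α(x)`: the variation `δx` satisfies
the linearized equation of motion. (Brackets: `[V,W](x) = DW(x)V(x) − DV(x)W(x)`.) -/
theorem gauge_symmetry_of_involutive_system
    (n l : ℕ)
    (V : (Fin n → ℝ) → (Fin n → ℝ)) (Z : Fin l → (Fin n → ℝ) → (Fin n → ℝ))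
    (hV : ContDiff ℝ (⊤ : ℕ∞) V) (hZ : ∀ α, ContDiff ℝ (⊤ : ℕ∞) (Z α))
    (U : Fin l → Fin l → Fin l → (Fin n → ℝ) → ℝ)
    (hUsmooth : ∀ γ α β, ContDiff ℝ (⊤ : ℕ∞) (U γ α β))
    (Vc : Fin l → Fin l → (Fin n → ℝ) → ℝ)
    (hVcsmooth : ∀ β α, ContDiff ℝ (⊤ : ℕ∞) (Vc β α))
    (hU : ∀ (α β : Fin l) (y : Fin n → ℝ),
      fderiv ℝ (Z β) y (Z α y) - fderiv ℝ (Z α) y (Z β y) = ∑ γ, U γ α β y • Z γ y)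
    (hVc : ∀ (α : Fin l) (y : Fin n → ℝ),
      fderiv ℝ V y (Z α y) - fderiv ℝ (Z α) y (V y) = ∑ β, Vc β α y • Z β y)
    (x : ℝ → (Fin n → ℝ)) (lam : ℝ → Fin l → ℝ) (eps : ℝ → Fin l → ℝ)
    (hx : ContDiff ℝ (⊤ : ℕ∞) x) (hlam : ContDiff ℝ (⊤ : ℕ∞) lam)
    (heps : ContDiff ℝ (⊤ : ℕ∞) eps)
    (heq : ∀ t, deriv x t = V (x t) + ∑ α, lam t α • Z α (x t)) :
    ∀ t, deriv (fun s => ∑ α, eps s α • Z α (x s)) t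
      = fderiv ℝ V (x t) (∑ α, eps t α • Z α (x t))
        + ∑ α, lam t α • fderiv ℝ (Z α) (x t) (∑ β, eps t β • Z β (x t))
        + ∑ α, (deriv (fun s => eps s α) t
            - ∑ β, (Vc α β (x t) + ∑ γ, U α β γ (x t) * lam t γ) * eps t β)
              • Z α (x t) := by
  intro t
  have hxd : Differentiable ℝ x := hx.differentiable (by simp)
  have hZd : ∀ α (y : Fin n → ℝ), DifferentiableAt ℝ (Z α) y :=
    fun α y => ((hZ α).differentiable (by simp)) y
  have hepsd : ∀ α, Differentiable ℝ (fun s => eps s α) :=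
    fun α => differentiable_pi.mp (heps.differentiable (by simp)) α
  have key : HasDerivAt (fun s => ∑ α, eps s α • Z α (x s))
      (∑ α, (eps t α • (fderiv ℝ (Z α) (x t)) (deriv x t)
        + deriv (fun s => eps s α) t • Z α (x t))) t := by
    apply HasDerivAt.fun_sum
    intro α _
    have h1 : HasDerivAt (fun s => eps s α) (deriv (fun s => eps s α) t) t :=
      ((hepsd α) t).hasDerivAt
    have h2 : HasDerivAt (fun s => Z α (x s)) ((fderiv ℝ (Z α) (x t)) (deriv x t)) t :=
      (hZd α (x t)).hasFDerivAt.comp_hasDerivAt t (hxd t).hasDerivAt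
    exact h1.smul h2
  rw [key.deriv, heq t]
  exact gauge_alg n l V Z U Vc (x t) (fun α => eps t α) (fun α => lam t α)
    (fun α => deriv (fun s => eps s α) t)
    (fun α β => sub_eq_iff_eq_add'.mp (hU β α (x t)))
    (fun β => sub_eq_iff_eq_add'.mp (hVc β (x t)))
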